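/- arXiv:2201.09823 — 4 statements merged into one kernel-verified Lean document; each statement's English description precedes it below -/
import Mathlib

section
/- If f : [0,∞) → ℝ is continuous and satisfies f(s) - f(r) ≤ -γ ∫_r^s f(τ) dτ + K(s - r) for all 0 < r < s, where γ, K > 0, then f(t) ≤ f(0) e^{-γ t} + K/γ for all t ≥ 0. -/
open MeasureTheory intervalIntegral

/-- Comparison theorem (integral Gronwall-type lemma). -/
theorem stmt0 (f : ℝ → ℝ) (γ K : ℝ) (hγ : 0 < γ) (hK : 0 < K)
    (hf : ContinuousOn f (Set.Ici (0 : ℝ)))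
    (hineq : ∀ r s : ℝ, 0 < r → r < s →
      f s - f r ≤ -γ * (∫ τ in r..s, f τ) + K * (s - r)) :
    ∀ t : ℝ, 0 ≤ t → f t ≤ f 0 * Real.exp (-γ * t) + K / γ := by
  have hKγ : 0 < K / γ := div_pos hK hγ
  set g : ℝ → ℝ := fun x => f (max x 0) - K / γ with hg_def
  have hg_cont : Continuous g := by
    have : Continuous fun x : ℝ => f (max x 0) :=
      hf.comp_continuous (continuous_id.max continuous_const) fun x => Set.mem_Ici.mpr (le_max_right _ _)
    exact this.sub continuous_const
  have hg_eq : ∀ x : ℝ, 0 ≤ x → g x = f x - K / γ := by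
    intro x hx; simp [hg_def, max_eq_left hx]
  -- key integral inequality for g
  have hgineq : ∀ r s : ℝ, 0 < r → r < s →
      g s - g r ≤ -γ * ∫ τ in r..s, g τ := by
    intro r s hr hrs
    have h1 : (∫ τ in r..s, g τ) = (∫ τ in r..s, f τ) - (K / γ) * (s - r) := by
      have hsub : Set.uIcc r s ⊆ Set.Ici (0 : ℝ) := by
        rw [Set.uIcc_of_le hrs.le]
        exact fun x hx => le_trans hr.le hx.1
      have hcg : (∫ τ in r..s, g τ) = ∫ τ in r..s, (f τ - K / γ) := by
        apply intervalIntegral.integral_congr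
        intro x hx
        rw [Set.uIcc_of_le hrs.le] at hx
        exact hg_eq x (le_trans hr.le hx.1)
      rw [hcg, intervalIntegral.integral_sub ((hf.mono hsub).intervalIntegrable)
        intervalIntegrable_const]
      simp only [intervalIntegral.integral_const, smul_eq_mul]
      ring
    have h2 := hineq r s hr hrs
    have hgr : g r = f r - K / γ := hg_eq r hr.le
    have hgs : g s = f s - K / γ := hg_eq s (hr.trans hrs).le
    rw [hgr, hgs, h1]
    have : γ * (K / γ) = K := by field_simp
    nlinarith [h2]
  set u : ℝ → ℝ := fun x => ∫ τ in (0:ℝ)..x, g τ with hu_def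
  have hu : ∀ x : ℝ, HasDerivAt u (g x) x := by
    intro x
    exact intervalIntegral.integral_hasDerivAt_right
      (hg_cont.intervalIntegrable 0 x)
      (hg_cont.stronglyMeasurable.stronglyMeasurableAtFilter)
      hg_cont.continuousAt
  have hu_cont : Continuous u := by
    rw [continuous_iff_continuousAt]
    exact fun x => (hu x).continuousAt
  have hu0 : u 0 = 0 := intervalIntegral.integral_same
  set G : ℝ → ℝ := fun x => g x + γ * u x with hG_def
  have hG_cont : Continuous G := hg_cont.add (continuous_const.mul hu_cont)
  -- G is antitone on (0, ∞)
  have hGstep : ∀ r s : ℝ, 0 < r → r < s → G s ≤ G r := by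
    intro r s hr hrs
    have hsub : u s - u r = ∫ τ in r..s, g τ := by
      simp only [hu_def]
      exact intervalIntegral.integral_interval_sub_left
        (hg_cont.intervalIntegrable 0 s) (hg_cont.intervalIntegrable 0 r)
    have := hgineq r s hr hrs
    rw [← hsub] at this
    simp only [hG_def]
    nlinarith [this]
  -- extend to r = 0 by continuity
  have hGanti : ∀ r s : ℝ, 0 ≤ r → r < s → G s ≤ G r := by
    intro r s hr hrs
    rcases hr.lt_or_eq with h | h
    · exact hGstep r s h hrs
    · subst h
      have htend : Filter.Tendsto G (nhdsWithin 0 (Set.Ioi 0)) (nhds (G 0)) :=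
        (hG_cont.tendsto 0).mono_left nhdsWithin_le_nhds
      refine ge_of_tendsto htend ?_
      filter_upwards [Ioo_mem_nhdsGT_of_mem (by constructor <;> linarith : (0:ℝ) ∈ Set.Ico (0:ℝ) s)] with x hx
      exact hGstep x s hx.1 hx.2
  -- main estimate: g t ≤ g 0 * exp (-γ t)
  have key : ∀ t : ℝ, 0 < t → g t * Real.exp (γ * t) ≤ g 0 := by
    intro t ht
    set C : ℝ := G t with hC_def
    set φ : ℝ → ℝ := fun s => Real.exp (γ * s) * (γ * u s - C) with hφ_def
    have hφd : ∀ s : ℝ, HasDerivAt φ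
        (γ * Real.exp (γ * s) * (γ * u s - C) + Real.exp (γ * s) * (γ * g s)) s := by
      intro s
      have hexp : HasDerivAt (fun s : ℝ => Real.exp (γ * s)) (γ * Real.exp (γ * s)) s := by
        have := (Real.hasDerivAt_exp (γ * s)).comp s ((hasDerivAt_id s).const_mul γ)
        exact this.congr_deriv (by ring)
      have hin : HasDerivAt (fun s => γ * u s - C) (γ * g s) s :=
        ((hu s).const_mul γ).sub_const C
      exact hexp.mul hin
    have hφmono : MonotoneOn φ (Set.Icc 0 t) := by
      apply monotoneOn_of_deriv_nonneg (convex_Icc 0 t)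
      · exact Continuous.continuousOn (by
          exact (Real.continuous_exp.comp (continuous_const.mul continuous_id)).mul
            ((continuous_const.mul hu_cont).sub continuous_const))
      · intro x hx
        exact (hφd x).differentiableAt.differentiableWithinAt
      · intro x hx
        rw [interior_Icc] at hx
        rw [(hφd x).deriv]
        have hGx : C ≤ G x := hGanti x t hx.1.le hx.2
        have : γ * Real.exp (γ * x) * (γ * u x - C) + Real.exp (γ * x) * (γ * g x)
            = γ * Real.exp (γ * x) * (G x - C) := by
          simp only [hG_def]; ring
        rw [this]
        exact mul_nonneg (by positivity) (by linarith)
    have h01 : φ 0 ≤ φ t :=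
      hφmono (Set.left_mem_Icc.mpr ht.le) (Set.right_mem_Icc.mpr ht.le) ht.le
    have hGt : C ≤ G 0 := hGanti 0 t le_rfl ht
    simp only [hφ_def, hu0, hC_def, hG_def] at h01 hGt ⊢
    have hexp := Real.exp_pos (γ * t)
    simp only [mul_zero, Real.exp_zero, one_mul] at h01 hGt
    nlinarith [h01, hGt]
  intro t ht
  rcases ht.lt_or_eq with h | h
  · have hk := key t h
    have hg0 : g 0 = f 0 - K / γ := hg_eq 0 le_rfl
    have hgt : g t = f t - K / γ := hg_eq t h.le
    rw [hg0, hgt] at hk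
    have hexp1 : Real.exp (-γ * t) * Real.exp (γ * t) = 1 := by
      rw [← Real.exp_add]; ring_nf; exact Real.exp_zero
    have hexp : 0 < Real.exp (γ * t) := Real.exp_pos _
    have hexp2 : 0 < Real.exp (-γ * t) := Real.exp_pos _
    have h4 : f t - K / γ ≤ (f 0 - K / γ) * Real.exp (-γ * t) := by
      have h3 := mul_le_mul_of_nonneg_right hk hexp2.le
      calc f t - K / γ = (f t - K / γ) * Real.exp (γ * t) * Real.exp (-γ * t) := by
            rw [mul_assoc, mul_comm (Real.exp (γ * t)), hexp1, mul_one]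
        _ ≤ (f 0 - K / γ) * Real.exp (-γ * t) := h3
    nlinarith [h4, mul_pos hKγ hexp2]
  · subst h
    simp only [mul_zero, neg_zero, Real.exp_zero, mul_one]
    linarith
end

section
/- Under the assumptions of the previous statement, if additionally a control G satisfies |G(X(s),Ỹ(s))|² ≤ c|X(s)-Ỹ(s)|² for some c > 0, and Q_n^{-1/2} is a bounded operator, then for all t ≥ 0: ∫₀ᵗ |Q_n^{-1/2}G(X(s),Ỹ(s))|² ds ≤ (c‖Q_n^{-1/2}‖²/χ)|x-y|² exp((κ₁/κ₂)(|x|²+Ξ))(1 - e^{-χt}), where χ = κ₀ - κ₁κ₃/κ₂. -/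
open MeasureTheory intervalIntegral

lemma stmt5_exp_int (χ t : ℝ) (hχ : χ ≠ 0) :
    ∫ s in (0:ℝ)..t, Real.exp (-χ * s) = (1 - Real.exp (-χ * t)) / χ := by
  have h : ∀ s ∈ Set.uIcc (0:ℝ) t, HasDerivAt (fun u => -(1/χ) * Real.exp (-χ * u))
      (Real.exp (-χ * s)) s := by
    intro s _
    have := ((hasDerivAt_id s).const_mul (-χ)).exp
    have h2 := this.const_mul (-(1/χ))
    simpa [mul_comm, mul_assoc, mul_left_comm, hχ] using h2
  rw [intervalIntegral.integral_eq_sub_of_hasDerivAt h]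
  · field_simp; ring_nf; rw [Real.exp_zero]; ring
  · exact (Real.continuous_exp.comp (continuous_const.mul continuous_id)).intervalIntegrable 0 t

/-- Bound on the Girsanov cost of the control: under (A1)-(A3),
`∫₀ᵗ |Qₙ^{-1/2} G(X(s),Ỹ(s))|² ds ≤ (c‖Qₙ^{-1/2}‖²/χ)|x-y|² e^{(κ₁/κ₂)(|x|²+Ξ)}(1-e^{-χt})`,
with `χ = κ₀ - κ₁κ₃/κ₂ > 0`.  Here `T` plays the role of `Qₙ^{-1/2}` and
`nV : H → ℝ` is the square of the second (stronger) norm. -/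
theorem stmt5 {H : Type*} [NormedAddCommGroup H] [InnerProductSpace ℝ H]
    (X Y : ℝ → H) (nV : H → ℝ) (hnV : ∀ z, 0 ≤ nV z)
    (Ξ κ₀ κ₁ κ₂ κ₃ : ℝ)
    (hκ₀ : 0 < κ₀) (hκ₁ : 0 < κ₁) (hκ₂ : 0 < κ₂) (hκ₃ : 0 < κ₃)
    (hχ : κ₁ * κ₃ / κ₂ < κ₀) (hΞ : 0 ≤ Ξ)
    (hA1 : ∀ t : ℝ, 0 ≤ t →
      ‖X t - Y t‖ ^ 2 ≤ ‖X 0 - Y 0‖ ^ 2 *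
        Real.exp (-κ₀ * t + κ₁ * ∫ s in (0:ℝ)..t, nV (X s)))
    (hA2 : ∀ t : ℝ, 0 ≤ t →
      ‖X t‖ ^ 2 + κ₂ * (∫ s in (0:ℝ)..t, nV (X s)) ≤ ‖X 0‖ ^ 2 + κ₃ * t + Ξ)
    (G : H → H → H) (c : ℝ) (hc : 0 < c)
    (hA3 : ∀ s : ℝ, 0 ≤ s → ‖G (X s) (Y s)‖ ^ 2 ≤ c * ‖X s - Y s‖ ^ 2)
    (T : H →L[ℝ] H) :
    ∀ t : ℝ, 0 ≤ t →
      (∫ s in (0:ℝ)..t, ‖T (G (X s) (Y s))‖ ^ 2) ≤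
        (c * ‖T‖ ^ 2 / (κ₀ - κ₁ * κ₃ / κ₂)) * ‖X 0 - Y 0‖ ^ 2 *
          Real.exp ((κ₁ / κ₂) * (‖X 0‖ ^ 2 + Ξ)) *
          (1 - Real.exp (-(κ₀ - κ₁ * κ₃ / κ₂) * t)) := by
  intro t ht
  set χ : ℝ := κ₀ - κ₁ * κ₃ / κ₂ with hχdef
  have hχpos : 0 < χ := by simp only [hχdef]; linarith
  set A : ℝ := c * ‖T‖ ^ 2 * ‖X 0 - Y 0‖ ^ 2 *
      Real.exp ((κ₁ / κ₂) * (‖X 0‖ ^ 2 + Ξ)) with hAdef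
  have hA0 : 0 ≤ A := by positivity
  -- pointwise bound
  have hpt : ∀ s : ℝ, 0 ≤ s → ‖T (G (X s) (Y s))‖ ^ 2 ≤ A * Real.exp (-χ * s) := by
    intro s hs
    have h1 : ‖T (G (X s) (Y s))‖ ^ 2 ≤ ‖T‖ ^ 2 * ‖G (X s) (Y s)‖ ^ 2 := by
      have := T.le_opNorm (G (X s) (Y s))
      nlinarith [norm_nonneg (T (G (X s) (Y s))), norm_nonneg (G (X s) (Y s)),
        norm_nonneg T]
    have h2 := hA3 s hs
    have h3 := hA1 s hs
    have h4 := hA2 s hs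
    set I : ℝ := ∫ u in (0:ℝ)..s, nV (X u)
    have hIb : κ₂ * I ≤ ‖X 0‖ ^ 2 + κ₃ * s + Ξ := by nlinarith [sq_nonneg ‖X s‖]
    have hexp : -κ₀ * s + κ₁ * I ≤ -χ * s + (κ₁ / κ₂) * (‖X 0‖ ^ 2 + Ξ) := by
      have h5 : κ₁ * I ≤ (κ₁ / κ₂) * (‖X 0‖ ^ 2 + κ₃ * s + Ξ) := by
        have := mul_le_mul_of_nonneg_left hIb (le_of_lt (div_pos hκ₁ hκ₂))
        calc κ₁ * I = (κ₁ / κ₂) * (κ₂ * I) := by field_simp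
          _ ≤ _ := this
      have : (κ₁ / κ₂) * (‖X 0‖ ^ 2 + κ₃ * s + Ξ)
          = (κ₁ * κ₃ / κ₂) * s + (κ₁ / κ₂) * (‖X 0‖ ^ 2 + Ξ) := by ring
      simp only [hχdef]; linarith [h5, this ▸ h5]
    have hexp' : Real.exp (-κ₀ * s + κ₁ * I)
        ≤ Real.exp (-χ * s) * Real.exp ((κ₁ / κ₂) * (‖X 0‖ ^ 2 + Ξ)) := by
      rw [← Real.exp_add]
      exact Real.exp_le_exp.mpr (by linarith)
    calc ‖T (G (X s) (Y s))‖ ^ 2 ≤ ‖T‖ ^ 2 * ‖G (X s) (Y s)‖ ^ 2 := h1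
      _ ≤ ‖T‖ ^ 2 * (c * ‖X s - Y s‖ ^ 2) := by
          apply mul_le_mul_of_nonneg_left h2 (by positivity)
      _ ≤ ‖T‖ ^ 2 * (c * (‖X 0 - Y 0‖ ^ 2 * Real.exp (-κ₀ * s + κ₁ * I))) := by
          apply mul_le_mul_of_nonneg_left _ (by positivity)
          exact mul_le_mul_of_nonneg_left h3 hc.le
      _ ≤ ‖T‖ ^ 2 * (c * (‖X 0 - Y 0‖ ^ 2 *
            (Real.exp (-χ * s) * Real.exp ((κ₁ / κ₂) * (‖X 0‖ ^ 2 + Ξ))))) := by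
          apply mul_le_mul_of_nonneg_left _ (by positivity)
          apply mul_le_mul_of_nonneg_left _ hc.le
          exact mul_le_mul_of_nonneg_left hexp' (by positivity)
      _ = A * Real.exp (-χ * s) := by rw [hAdef]; ring
  have hgint : IntervalIntegrable (fun s => A * Real.exp (-χ * s)) volume 0 t :=
    ((continuous_const.mul (Real.continuous_exp.comp
      (continuous_const.mul continuous_id))).intervalIntegrable 0 t)
  have hgval : ∫ s in (0:ℝ)..t, A * Real.exp (-χ * s)
      = A / χ * (1 - Real.exp (-χ * t)) := by
    rw [intervalIntegral.integral_const_mul, stmt5_exp_int χ t hχpos.ne']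
    ring
  have hRHSeq : (c * ‖T‖ ^ 2 / χ) * ‖X 0 - Y 0‖ ^ 2 *
      Real.exp ((κ₁ / κ₂) * (‖X 0‖ ^ 2 + Ξ)) * (1 - Real.exp (-χ * t))
      = A / χ * (1 - Real.exp (-χ * t)) := by rw [hAdef]; ring
  rw [hRHSeq, ← hgval]
  by_cases hfint : IntervalIntegrable (fun s => ‖T (G (X s) (Y s))‖ ^ 2) volume 0 t
  · apply intervalIntegral.integral_mono_on ht hfint hgint
    intro s hs
    exact hpt s hs.1
  · rw [intervalIntegral.integral_undef hfint, hgval]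
    have : 0 ≤ 1 - Real.exp (-χ * t) := by
      have : Real.exp (-χ * t) ≤ 1 := Real.exp_le_one_iff.mpr (by nlinarith)
      linarith
    positivity
end

section
/- Let A = -(Δ + M) with M the 2×2 matrix with rows (-F₁, F₁) and (F₂, -F₂), F₁, F₂ > 0, acting on pairs ψ = (ψ₁,ψ₂) of zero-mean periodic H^{k+2} functions. Then with the weighted inner product (ψ,ξ)_k = h₁(ψ₁,ξ₁)_k + h₂(ψ₂,ξ₂)_k where h₁F₁ = h₂F₂ = p, one has (Aψ, ψ)_k = ‖ψ‖²_{k+1} + p|ψ₁-ψ₂|²_k ≥ 0; in particular A is nonnegative and symmetric with respect to (·,·)_k. -/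
open RealInnerProductSpace

/-- The operator `A = -(Δ + M)` on pairs of zero-mean periodic functions is
nonnegative and symmetric for the weighted `H^k` inner product:
`(Aψ, ψ)_k = ‖ψ‖²_{k+1} + p |ψ₁ - ψ₂|²_k ≥ 0`.
The `H^k` space is modelled by an abstract real inner product space `V`; `D`
plays the role of `-Δ`, so that `‖φ‖²_{k+1} = ⟪Dφ, φ⟫_k`, and the first
component of `Aψ` is `Dψ₁ + F₁(ψ₁ - ψ₂)`, the second `Dψ₂ + F₂(ψ₂ - ψ₁)`. -/
theorem stmt9 {V : Type*} [NormedAddCommGroup V] [InnerProductSpace ℝ V]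
    (D : V →ₗ[ℝ] V)
    (hDsym : ∀ φ χ : V, ⟪D φ, χ⟫ = ⟪φ, D χ⟫)
    (hDpos : ∀ φ : V, 0 ≤ ⟪D φ, φ⟫)
    (h₁ h₂ F₁ F₂ p : ℝ)
    (hh₁ : 0 < h₁) (hh₂ : 0 < h₂) (hF₁ : 0 < F₁) (hF₂ : 0 < F₂)
    (hp₁ : h₁ * F₁ = p) (hp₂ : h₂ * F₂ = p) :
    (∀ ψ₁ ψ₂ : V,
      h₁ * ⟪D ψ₁ + F₁ • (ψ₁ - ψ₂), ψ₁⟫ + h₂ * ⟪D ψ₂ + F₂ • (ψ₂ - ψ₁), ψ₂⟫ =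
        (h₁ * ⟪D ψ₁, ψ₁⟫ + h₂ * ⟪D ψ₂, ψ₂⟫) + p * ‖ψ₁ - ψ₂‖ ^ 2 ∧
      0 ≤ h₁ * ⟪D ψ₁ + F₁ • (ψ₁ - ψ₂), ψ₁⟫ + h₂ * ⟪D ψ₂ + F₂ • (ψ₂ - ψ₁), ψ₂⟫) ∧
    (∀ ψ₁ ψ₂ ξ₁ ξ₂ : V,
      h₁ * ⟪D ψ₁ + F₁ • (ψ₁ - ψ₂), ξ₁⟫ + h₂ * ⟪D ψ₂ + F₂ • (ψ₂ - ψ₁), ξ₂⟫ =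
        h₁ * ⟪ψ₁, D ξ₁ + F₁ • (ξ₁ - ξ₂)⟫ + h₂ * ⟪ψ₂, D ξ₂ + F₂ • (ξ₂ - ξ₁)⟫) := by

  have key : ∀ ψ₁ ψ₂ : V,
      h₁ * ⟪D ψ₁ + F₁ • (ψ₁ - ψ₂), ψ₁⟫ + h₂ * ⟪D ψ₂ + F₂ • (ψ₂ - ψ₁), ψ₂⟫ =
        (h₁ * ⟪D ψ₁, ψ₁⟫ + h₂ * ⟪D ψ₂, ψ₂⟫) + p * ‖ψ₁ - ψ₂‖ ^ 2 := by
    intro ψ₁ ψ₂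
    have hn : ‖ψ₁ - ψ₂‖ ^ 2 = ⟪ψ₁ - ψ₂, ψ₁ - ψ₂⟫ := (real_inner_self_eq_norm_sq _).symm
    have hc : ⟪ψ₂, ψ₁⟫ = ⟪ψ₁, ψ₂⟫ := real_inner_comm _ _
    simp only [inner_add_left, real_inner_smul_left, inner_sub_left, inner_sub_right] at *
    rw [hn]
    linear_combination (⟪ψ₁, ψ₁⟫ - ⟪ψ₂, ψ₁⟫) * hp₁ + (⟪ψ₂, ψ₂⟫ - ⟪ψ₁, ψ₂⟫) * hp₂
  refine ⟨fun ψ₁ ψ₂ => ⟨key ψ₁ ψ₂, ?_⟩, fun ψ₁ ψ₂ ξ₁ ξ₂ => ?_⟩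
  · rw [key ψ₁ ψ₂]
    have := hDpos ψ₁; have := hDpos ψ₂
    have : 0 ≤ p := hp₁ ▸ le_of_lt (mul_pos hh₁ hF₁)
    positivity
  · have hc12 : ⟪ψ₂, ξ₁⟫ = ⟪ξ₁, ψ₂⟫ := real_inner_comm _ _
    have hc21 : ⟪ψ₁, ξ₂⟫ = ⟪ξ₂, ψ₁⟫ := real_inner_comm _ _
    have hc1 : ⟪ψ₁, ξ₁⟫ = ⟪ξ₁, ψ₁⟫ := real_inner_comm _ _
    have hc2 : ⟪ψ₂, ξ₂⟫ = ⟪ξ₂, ψ₂⟫ := real_inner_comm _ _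
    have hd1 := hDsym ψ₁ ξ₁
    have hd2 := hDsym ψ₂ ξ₂
    simp only [inner_add_left, inner_add_right, real_inner_smul_left,
      real_inner_smul_right, inner_sub_left, inner_sub_right] at *
    linear_combination h₁ * hd1 + h₂ * hd2 + (⟪ψ₁, ξ₂⟫ - ⟪ψ₂, ξ₁⟫) * hp₁ +
      (⟪ψ₂, ξ₁⟫ - ⟪ψ₁, ξ₂⟫) * hp₂
end

section
/- With q = -(Δ + M)ψ as above, one has -(q, ψ) = ‖ψ‖² + p|ψ₁-ψ₂|², where (·,·) is the weighted L² inner product and ‖·‖ the weighted H¹ seminorm; consequently the triple norm ⦀q⦀₋₁² := ‖ψ‖² + p|ψ₁-ψ₂|² satisfies ‖ψ‖² ≤ ⦀q⦀₋₁² ≤ (1 + 2λ₁^{-1}max(F₁,F₂))‖ψ‖². -/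
open RealInnerProductSpace

/-- With `q = (Δ + M)ψ` (so that `q = -Ãψ` where `Ã = -(Δ+M)`), one has
`-(q, ψ) = ‖ψ‖²_{H¹} + p |ψ₁ - ψ₂|²` and the triple norm
`⦀q⦀₋₁² := ‖ψ‖² + p|ψ₁-ψ₂|²` satisfies
`‖ψ‖² ≤ ⦀q⦀₋₁² ≤ (1 + 2λ₁⁻¹ max(F₁,F₂)) ‖ψ‖²`.
The `L²` space is an abstract real inner product space `V`; `D` models `-Δ`
(symmetric, nonnegative), the weighted `H¹` seminorm is
`‖ψ‖² = h₁⟪Dψ₁,ψ₁⟫ + h₂⟪Dψ₂,ψ₂⟫`, `q₁ = -Dψ₁ + F₁(ψ₂-ψ₁)`,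
`q₂ = -Dψ₂ + F₂(ψ₁-ψ₂)`, and the Poincaré inequality
`‖φ‖²_{L²} ≤ λ₁⁻¹ ⟪Dφ,φ⟫` is assumed. -/
theorem stmt11 {V : Type*} [NormedAddCommGroup V] [InnerProductSpace ℝ V]
    (D : V →ₗ[ℝ] V)
    (hDsym : ∀ φ χ : V, ⟪D φ, χ⟫ = ⟪φ, D χ⟫)
    (hDpos : ∀ φ : V, 0 ≤ ⟪D φ, φ⟫)
    (lam₁ : ℝ) (hlam : 0 < lam₁)
    (hPoincare : ∀ φ : V, ‖φ‖ ^ 2 ≤ lam₁⁻¹ * ⟪D φ, φ⟫)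
    (h₁ h₂ F₁ F₂ p : ℝ)
    (hh₁ : 0 < h₁) (hh₂ : 0 < h₂) (hF₁ : 0 < F₁) (hF₂ : 0 < F₂)
    (hp₁ : h₁ * F₁ = p) (hp₂ : h₂ * F₂ = p)
    (ψ₁ ψ₂ : V) :
    -(h₁ * ⟪-(D ψ₁) + F₁ • (ψ₂ - ψ₁), ψ₁⟫ + h₂ * ⟪-(D ψ₂) + F₂ • (ψ₁ - ψ₂), ψ₂⟫) =
        (h₁ * ⟪D ψ₁, ψ₁⟫ + h₂ * ⟪D ψ₂, ψ₂⟫) + p * ‖ψ₁ - ψ₂‖ ^ 2 ∧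
    h₁ * ⟪D ψ₁, ψ₁⟫ + h₂ * ⟪D ψ₂, ψ₂⟫ ≤
        (h₁ * ⟪D ψ₁, ψ₁⟫ + h₂ * ⟪D ψ₂, ψ₂⟫) + p * ‖ψ₁ - ψ₂‖ ^ 2 ∧
    (h₁ * ⟪D ψ₁, ψ₁⟫ + h₂ * ⟪D ψ₂, ψ₂⟫) + p * ‖ψ₁ - ψ₂‖ ^ 2 ≤
        (1 + 2 * lam₁⁻¹ * max F₁ F₂) * (h₁ * ⟪D ψ₁, ψ₁⟫ + h₂ * ⟪D ψ₂, ψ₂⟫) := by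
  have hp : 0 < p := hp₁ ▸ mul_pos hh₁ hF₁
  have hns : ‖ψ₁ - ψ₂‖ ^ 2 = ⟪ψ₁, ψ₁⟫ - 2 * ⟪ψ₁, ψ₂⟫ + ⟪ψ₂, ψ₂⟫ := by
    rw [← real_inner_self_eq_norm_sq]
    simp [inner_sub_left, inner_sub_right, real_inner_comm ψ₁ ψ₂]
    rw [norm_sub_sq_real]
  refine ⟨?_, ?_, ?_⟩
  · simp only [inner_add_left, inner_neg_left, real_inner_smul_left, inner_sub_left,
      real_inner_comm ψ₂ ψ₁, hns]
    linear_combination (⟪ψ₁, ψ₁⟫ - ⟪ψ₂, ψ₁⟫) * hp₁ + (⟪ψ₂, ψ₂⟫ - ⟪ψ₂, ψ₁⟫) * hp₂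
  · nlinarith [sq_nonneg ‖ψ₁ - ψ₂‖]
  · have key : p * ‖ψ₁ - ψ₂‖ ^ 2 ≤
        2 * lam₁⁻¹ * max F₁ F₂ * (h₁ * ⟪D ψ₁, ψ₁⟫ + h₂ * ⟪D ψ₂, ψ₂⟫) := by
      have h1 : ‖ψ₁ - ψ₂‖ ^ 2 ≤ 2 * ‖ψ₁‖ ^ 2 + 2 * ‖ψ₂‖ ^ 2 := by
        have h := norm_sub_le ψ₁ ψ₂
        nlinarith [h, sq_nonneg (‖ψ₁‖ - ‖ψ₂‖), norm_nonneg (ψ₁ - ψ₂), norm_nonneg ψ₁, norm_nonneg ψ₂]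
      have h2 : ‖ψ₁‖ ^ 2 ≤ lam₁⁻¹ * ⟪D ψ₁, ψ₁⟫ := hPoincare ψ₁
      have h3 : ‖ψ₂‖ ^ 2 ≤ lam₁⁻¹ * ⟪D ψ₂, ψ₂⟫ := hPoincare ψ₂
      have hm1 : p ≤ max F₁ F₂ * h₁ := by
        rw [← hp₁]; nlinarith [le_max_left F₁ F₂]
      have hm2 : p ≤ max F₁ F₂ * h₂ := by
        rw [← hp₂]; nlinarith [le_max_right F₁ F₂]
      have hli : 0 ≤ lam₁⁻¹ := le_of_lt (inv_pos.2 hlam)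
      nlinarith [hDpos ψ₁, hDpos ψ₂, mul_nonneg hli (hDpos ψ₁), mul_nonneg hli (hDpos ψ₂)]
    nlinarith
end
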